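/- For any Kripke model M, world s, and formulas φ, ψ, the almost-definability schema holds: if ¬Δψ is true at s (i.e., there exist two successors of s disagreeing on ψ), then □φ is true at s if and only if both Δφ and Δ(ψ→φ) are true at s. -/
import Mathlib


/-- Box semantics: φ holds at all R-successors of s. -/
def box {S : Type*} (R : S → S → Prop) (φ : S → Prop) (s : S) : Prop :=
  ∀ t, R s t → φ t

/-- Δ (knowing whether) semantics: all R-successors of s agree on φ. -/
def delta {S : Type*} (R : S → S → Prop) (φ : S → Prop) (s : S) : Prop :=
  (∀ t, R s t → φ t) ∨ (∀ t, R s t → ¬ φ t)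

/-- Almost-definability schema: if ¬Δψ at s, then □φ ↔ (Δφ ∧ Δ(ψ→φ)) at s. -/
theorem almost_definability {S : Type*} (R : S → S → Prop) (φ ψ : S → Prop) (s : S)
    (h : ¬ delta R ψ s) :
    box R φ s ↔ (delta R φ s ∧ delta R (fun t => ψ t → φ t) s) := by
  unfold delta at h ⊢
  push_neg at h
  obtain ⟨⟨t1, ht1, hψ1⟩, t2, ht2, hψ2⟩ := h
  constructor
  · intro hb
    exact ⟨Or.inl hb, Or.inl fun t ht _ => hb t ht⟩
  · rintro ⟨hφ | hφ, hi | hi⟩ t ht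
    · exact hφ t ht
    · exact hφ t ht
    · exact absurd (hi t2 ht2 hψ2) (hφ t2 ht2)
    · exact absurd (fun hx => absurd hx hψ1) (hi t1 ht1)
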